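/- Let π be a finite measure on a product space X × Y with target marginal π₁ (pushforward under the second projection), and let ν be a finite measure on Y with π₁ ≪ ν and ν ≪ π₁. Set s = dπ₁/dν. Then the measure on X × Y with density (x,y) ↦ s(y)⁻¹ with respect to π has second marginal equal to ν. -/

import Mathlib

open MeasureTheory ENNReal

lemma map_snd_withDensity {X Y : Type*} [MeasurableSpace X] [MeasurableSpace Y]
    (π : Measure (X × Y)) (f : Y → ℝ≥0∞) (hf : Measurable f) :
    (π.withDensity (fun p => f p.2)).map Prod.snd = (π.map Prod.snd).withDensity f := by
  ext s hs
  rw [Measure.map_apply measurable_snd hs, withDensity_apply _ (measurable_snd hs),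
    withDensity_apply _ hs, setLIntegral_map hs hf measurable_snd]

/-- Reweighting a coupling by the inverse majority score `s(y)⁻¹ = (d(π₁)/dν)(y)⁻¹`
yields a measure on `X × Y` whose second marginal is exactly `ν`. -/
theorem stmt2 {X Y : Type*} [MeasurableSpace X] [MeasurableSpace Y]
    (π : Measure (X × Y)) [IsFiniteMeasure π] (ν : Measure Y) [IsFiniteMeasure ν]
    (h1 : π.map Prod.snd ≪ ν) (h2 : ν ≪ π.map Prod.snd) :
    (π.withDensity (fun p => (((π.map Prod.snd).rnDeriv ν) p.2)⁻¹)).map Prod.snd = ν := by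
  have : IsFiniteMeasure (π.map Prod.snd) := Measure.isFiniteMeasure_map π Prod.snd
  rw [map_snd_withDensity π (fun y => ((π.map Prod.snd).rnDeriv ν y)⁻¹) (Measure.measurable_rnDeriv _ _).inv]
  exact (withDensity_congr_ae (Measure.inv_rnDeriv h1)).trans
    (Measure.withDensity_rnDeriv_eq _ _ h2)
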